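/- Let X, Y, Z be random variables with values in finite nonempty types on a common probability space such that Z = f(X) for a deterministic function f and Z is sufficient for Y, i.e. I(Z;Y) = I(X;Y). Then the information the representation retains about the input is at least the label information: I(Z;X) ≥ I(X;Y). In particular, I(X;Y) is a lower bound for the minimality objective min over sufficient representations of I(Z;X). -/

import Mathlib

open MeasureTheory ProbabilityTheory
open scoped BigOperators

/-- Shannon entropy (in nats) of a random variable `X` with values in a finite type,
with respect to the measure `μ`. -/
noncomputable def finEntropy {Ω : Type*} [MeasurableSpace Ω] (μ : Measure Ω)
    {α : Type*} [Fintype α] (X : Ω → α) : ℝ :=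
  - ∑ a : α, (μ (X ⁻¹' {a})).toReal * Real.log (μ (X ⁻¹' {a})).toReal

/-- Conditional Shannon entropy `H(X|Z) = H(X,Z) - H(Z)`. -/
noncomputable def finCondEntropy {Ω : Type*} [MeasurableSpace Ω] (μ : Measure Ω)
    {α β : Type*} [Fintype α] [Fintype β] (X : Ω → α) (Z : Ω → β) : ℝ :=
  finEntropy μ (fun ω => (X ω, Z ω)) - finEntropy μ Z

/-- Shannon mutual information `I(X;Y) = H(X) + H(Y) - H(X,Y)`. -/
noncomputable def finMutualInfo {Ω : Type*} [MeasurableSpace Ω] (μ : Measure Ω)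
    {α β : Type*} [Fintype α] [Fintype β] (X : Ω → α) (Y : Ω → β) : ℝ :=
  finEntropy μ X + finEntropy μ Y - finEntropy μ (fun ω => (X ω, Y ω))

/-- Conditional Shannon mutual information
`I(X;Y|S) = H(X,S) + H(Y,S) - H(X,Y,S) - H(S)`. -/
noncomputable def finCondMutualInfo {Ω : Type*} [MeasurableSpace Ω] (μ : Measure Ω)
    {α β γ : Type*} [Fintype α] [Fintype β] [Fintype γ]
    (X : Ω → α) (Y : Ω → β) (S : Ω → γ) : ℝ :=
  finEntropy μ (fun ω => (X ω, S ω)) + finEntropy μ (fun ω => (Y ω, S ω))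
    - finEntropy μ (fun ω => (X ω, Y ω, S ω)) - finEntropy μ S

lemma aux_negMulLog_sum {ι : Type*} [Fintype ι] (p : ι → ℝ) (hp : ∀ i, 0 ≤ p i) :
    Real.negMulLog (∑ i, p i) ≤ ∑ i, Real.negMulLog (p i) := by
  set s := ∑ i, p i with hs
  have hs0 : 0 ≤ s := Finset.sum_nonneg fun i _ => hp i
  have key : ∀ i : ι, p i * (-Real.log s) ≤ Real.negMulLog (p i) := by
    intro i
    rcases eq_or_lt_of_le (hp i) with h | h
    · simp [← h, Real.negMulLog]
    · have hle : p i ≤ s := Finset.single_le_sum (fun j _ => hp j) (Finset.mem_univ i)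
      have : Real.log (p i) ≤ Real.log s := Real.log_le_log h hle
      have := mul_le_mul_of_nonneg_left (neg_le_neg this) (le_of_lt h)
      simpa [Real.negMulLog, mul_comm] using this
  calc Real.negMulLog s = s * (-Real.log s) := by simp [Real.negMulLog]
    _ = ∑ i, p i * (-Real.log s) := by rw [hs, Finset.sum_mul]
    _ ≤ ∑ i, Real.negMulLog (p i) := Finset.sum_le_sum fun i _ => key i

lemma finEntropy_eq_sum_negMulLog {Ω : Type*} [MeasurableSpace Ω] (μ : Measure Ω)
    {α : Type*} [Fintype α] (X : Ω → α) :
    finEntropy μ X = ∑ a : α, Real.negMulLog (μ (X ⁻¹' {a})).toReal := by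
  simp [finEntropy, Real.negMulLog, ← Finset.sum_neg_distrib, neg_mul]

/-- H(f∘X, X) = H(X). -/
lemma finEntropy_pair_comp {Ω : Type*} [MeasurableSpace Ω] (μ : Measure Ω)
    {α β : Type*} [Fintype α] [Fintype β] (X : Ω → α) (f : α → β) :
    finEntropy μ (fun ω => (f (X ω), X ω)) = finEntropy μ X := by
  rw [finEntropy_eq_sum_negMulLog, finEntropy_eq_sum_negMulLog, Fintype.sum_prod_type_right]
  refine Finset.sum_congr rfl fun a _ => ?_
  rw [Finset.sum_eq_single (f a)]
  · have : (fun ω => (f (X ω), X ω)) ⁻¹' {(f a, a)} = X ⁻¹' {a} := by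
      ext ω; simp; intro h; rw [h]
    rw [this]
  · intro b _ hb
    have : (fun ω => (f (X ω), X ω)) ⁻¹' {(b, a)} = ∅ := by
      ext ω; simp; intro h1 h2; exact hb (h2 ▸ h1.symm)
    simp [this]
  · simp

/-- H(Y) ≤ H(Z,Y). -/
lemma finEntropy_le_pair {Ω : Type*} [MeasurableSpace Ω] (μ : Measure Ω)
    [IsProbabilityMeasure μ]
    {β γ : Type*} [Fintype β] [Fintype γ]
    [MeasurableSpace β] [MeasurableSingletonClass β]
    [MeasurableSpace γ] [MeasurableSingletonClass γ]
    (Y : Ω → β) (Z : Ω → γ) (hY : Measurable Y) (hZ : Measurable Z) :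
    finEntropy μ Y ≤ finEntropy μ (fun ω => (Z ω, Y ω)) := by
  rw [finEntropy_eq_sum_negMulLog, finEntropy_eq_sum_negMulLog, Fintype.sum_prod_type_right]
  refine Finset.sum_le_sum fun y _ => ?_
  have hsplit : (μ (Y ⁻¹' {y})).toReal
      = ∑ z : γ, (μ ((fun ω => (Z ω, Y ω)) ⁻¹' {(z, y)})).toReal := by
    have hset : Y ⁻¹' {y} = ⋃ z ∈ (Finset.univ : Finset γ),
        (fun ω => (Z ω, Y ω)) ⁻¹' {(z, y)} := by
      ext ω; simp
    have hmeas : ∀ z : γ, MeasurableSet ((fun ω => (Z ω, Y ω)) ⁻¹' {(z, y)}) := by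
      intro z
      have : (fun ω => (Z ω, Y ω)) ⁻¹' {(z, y)} = Z ⁻¹' {z} ∩ Y ⁻¹' {y} := by
        ext ω; simp [and_comm]
      rw [this]
      exact (hZ (measurableSet_singleton z)).inter (hY (measurableSet_singleton y))
    have hdisj : (↑(Finset.univ : Finset γ) : Set γ).PairwiseDisjoint
        (fun z => (fun ω => (Z ω, Y ω)) ⁻¹' {(z, y)}) := by
      intro a _ b _ hab
      refine Set.disjoint_left.2 fun ω ha hb => hab ?_
      simp at ha hb
      rw [← ha.1, ← hb.1]
    rw [hset, measure_biUnion_finset hdisj fun z _ => hmeas z,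
      ENNReal.toReal_sum fun z _ => measure_ne_top μ _]
  rw [hsplit]
  exact aux_negMulLog_sum _ fun z => ENNReal.toReal_nonneg

theorem sufficiency_lower_bound_minimality {Ω : Type*} [MeasurableSpace Ω]
    (μ : Measure Ω) [IsProbabilityMeasure μ]
    {𝒳 𝒴 𝒵 : Type*}
    [Fintype 𝒳] [Nonempty 𝒳] [MeasurableSpace 𝒳] [MeasurableSingletonClass 𝒳]
    [Fintype 𝒴] [Nonempty 𝒴] [MeasurableSpace 𝒴] [MeasurableSingletonClass 𝒴]
    [Fintype 𝒵] [Nonempty 𝒵] [MeasurableSpace 𝒵] [MeasurableSingletonClass 𝒵]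
    (X : Ω → 𝒳) (Y : Ω → 𝒴) (Z : Ω → 𝒵)
    (hX : Measurable X) (hY : Measurable Y) (hZ : Measurable Z)
    (f : 𝒳 → 𝒵) (hZf : Z = f ∘ X)
    (hsuff : finMutualInfo μ Z Y = finMutualInfo μ X Y) :
    finMutualInfo μ Z X ≥ finMutualInfo μ X Y := by
  have hZX : finMutualInfo μ Z X = finEntropy μ Z := by
    have : (fun ω => (Z ω, X ω)) = fun ω => (f (X ω), X ω) := by
      funext ω; rw [hZf]; rfl
    rw [finMutualInfo, this, finEntropy_pair_comp]
    ring
  have hle : finMutualInfo μ Z Y ≤ finEntropy μ Z := by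
    have := finEntropy_le_pair μ Y Z hY hZ
    rw [finMutualInfo]; linarith
  rw [hZX, ← hsuff]; exact hle
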